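/- Let w be a Schwarz function (analytic self-map of the unit disk with w(0) = 0), and let {φ_n(r)} be nonnegative continuous functions on [0,1) with Σ φ_n locally uniformly convergent. If r ∈ [0,1) satisfies φ_0(r) ≥ 2 Σ_{n≥1} (n+1) φ_n(r), then Σ_{n≥0} (n+1) |a_{n+1}| φ_n(r) ≤ φ_0(r), where w(z) = Σ_{n≥1} a_n z^n. -/

import Mathlib

open Filter
open Finset Metric



/-- Power series from pointwise `HasSum` on the unit ball. -/
lemma aux_hfps (c : ℕ → ℂ) (f : ℂ → ℂ)
    (h : ∀ z : ℂ, ‖z‖ < 1 → HasSum (fun k : ℕ => c k * z ^ k) (f z)) :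
    HasFPowerSeriesOnBall f (FormalMultilinearSeries.ofScalars ℂ c) 0 1 := by
  have hfun : ∀ y : ℂ, (fun n : ℕ => (FormalMultilinearSeries.ofScalars ℂ c n) fun _ => y)
      = fun k : ℕ => c k * y ^ k := by
    intro y; funext n
    rw [FormalMultilinearSeries.ofScalars_apply_eq]; simp [smul_eq_mul]
  constructor
  · refine ENNReal.le_of_forall_nnreal_lt (fun s hs => ?_)
    have hs1 : (s : ℝ) < 1 := by exact_mod_cast hs
    have hz : ‖((s : ℝ) : ℂ)‖ < 1 := by
      simpa [abs_of_nonneg s.coe_nonneg] using hs1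
    have hsum := (h _ hz).summable
    have ht : Tendsto (fun k : ℕ => ‖c k * ((s : ℝ) : ℂ) ^ k‖) atTop (nhds 0) := by
      simpa using hsum.tendsto_atTop_zero.norm
    apply FormalMultilinearSeries.le_radius_of_tendsto _ (l := 0)
    refine ht.congr (fun k => ?_)
    rw [norm_mul, norm_pow, FormalMultilinearSeries.ofScalars_norm]
    simp [abs_of_nonneg s.coe_nonneg]
  · exact one_pos
  · intro y hy
    have hy' : ‖y‖ < 1 := by
      rw [mem_emetric_ball_zero_iff, enorm_eq_nnnorm] at hy
      exact_mod_cast hy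
    rw [hfun y, zero_add]
    exact h y hy'

/-- Maximum-modulus style bound: if `f` is differentiable on the unit ball and
`‖f z‖ ≤ 1/‖z‖` off the origin, then `‖f‖ ≤ 1` on the ball. -/
lemma aux_max (f : ℂ → ℂ) (hd : DifferentiableOn ℂ f (ball (0:ℂ) 1))
    (hbd : ∀ z : ℂ, z ≠ 0 → ‖z‖ < 1 → ‖f z‖ ≤ 1 / ‖z‖) :
    ∀ z : ℂ, ‖z‖ < 1 → ‖f z‖ ≤ 1 := by
  intro z hz
  by_contra hc
  push_neg at hc
  set ρ : ℝ := max ‖z‖ (1 / ‖f z‖) with hρdef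
  have hfz : (0:ℝ) < ‖f z‖ := lt_trans one_pos hc
  have hρ0 : 0 < ρ := lt_of_lt_of_le (by positivity) (le_max_right _ _)
  have hρ1 : ρ < 1 := max_lt hz (by rw [div_lt_one hfz]; exact hc)
  set ρ' : ℝ := (ρ + 1) / 2 with hρ'def
  have hρρ' : ρ < ρ' := by simp only [hρ'def]; linarith
  have hρ'1 : ρ' < 1 := by simp only [hρ'def]; linarith
  have hρ'0 : 0 < ρ' := lt_trans hρ0 hρρ'
  have hsub : closedBall (0:ℂ) ρ' ⊆ ball (0:ℂ) 1 := closedBall_subset_ball hρ'1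
  have hdc : DiffContOnCl ℂ f (ball (0:ℂ) ρ') := by
    apply DifferentiableOn.diffContOnCl
    rw [closure_ball _ (ne_of_gt hρ'0)]
    exact hd.mono hsub
  have hkey : ‖f z‖ ≤ 1 / ρ' := by
    have := Complex.norm_le_of_forall_mem_frontier_norm_le
      (isBounded_ball (x := (0:ℂ)) (r := ρ')) hdc (C := 1 / ρ') ?_ (z := z) ?_
    · exact this
    · intro ζ hζ
      rw [frontier_ball _ (ne_of_gt hρ'0)] at hζ
      have hζn : ‖ζ‖ = ρ' := by simpa using hζ
      have hζ0 : ζ ≠ 0 := by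
        intro h; rw [h] at hζn; simp at hζn; exact (ne_of_gt hρ'0) hζn.symm
      have := hbd ζ hζ0 (by rw [hζn]; exact hρ'1)
      rwa [hζn] at this
    · rw [closure_ball _ (ne_of_gt hρ'0)]
      exact mem_closedBall_zero_iff.2 (le_of_lt (lt_of_le_of_lt (le_max_left _ _) hρρ'))
  have : 1 / ρ' < ‖f z‖ := by
    rw [div_lt_iff₀ hρ'0]
    have h1 : 1 / ‖f z‖ < ρ' := lt_of_le_of_lt (le_max_right _ _) hρρ'
    rw [div_lt_iff₀ hfz] at h1
    linarith [mul_comm ρ' ‖f z‖ ▸ h1]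
  linarith

/-- Möbius map inequality. -/
lemma aux_mobius (d v : ℂ) (hv : ‖v‖ ≤ 1) (hd : ‖d‖ ≤ 1) :
    ‖v - d‖ ≤ ‖1 - (starRingEnd ℂ) d * v‖ := by
  have h1 : v.re ^ 2 + v.im ^ 2 ≤ 1 := by
    have : Complex.normSq v ≤ 1 := by
      rw [← Complex.sq_norm]; nlinarith [norm_nonneg v]
    simpa [Complex.normSq_apply, sq] using this
  have h2 : d.re ^ 2 + d.im ^ 2 ≤ 1 := by
    have : Complex.normSq d ≤ 1 := by
      rw [← Complex.sq_norm]; nlinarith [norm_nonneg d]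
    simpa [Complex.normSq_apply, sq] using this
  have key : Complex.normSq (v - d) ≤ Complex.normSq (1 - (starRingEnd ℂ) d * v) := by
    simp only [Complex.normSq_apply, Complex.sub_re, Complex.sub_im, Complex.one_re,
      Complex.one_im, Complex.mul_re, Complex.mul_im, Complex.conj_re, Complex.conj_im]
    nlinarith [sq_nonneg (v.re*d.im - v.im*d.re), sq_nonneg (v.re*d.re + v.im*d.im)]
  calc ‖v - d‖ = Real.sqrt (Complex.normSq (v - d)) := by
        rw [Complex.norm_def]
    _ ≤ Real.sqrt (Complex.normSq (1 - (starRingEnd ℂ) d * v)) := Real.sqrt_le_sqrt key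
    _ = ‖1 - (starRingEnd ℂ) d * v‖ := by rw [Complex.norm_def]

/-- Root of unity sum. -/
lemma aux_rootsum {n : ℕ} {ζ : ℂ} (hζ : IsPrimitiveRoot ζ n) (k : ℕ) :
    ∑ j ∈ range n, (ζ ^ k) ^ j = if n ∣ k then (n : ℂ) else 0 := by
  by_cases h : n ∣ k
  · rw [if_pos h]
    have h1 : ζ ^ k = 1 := (hζ.pow_eq_one_iff_dvd k).2 h
    simp [h1]
  · rw [if_neg h]
    have h1 : ζ ^ k ≠ 1 := fun hh => h ((hζ.pow_eq_one_iff_dvd k).1 hh)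
    rw [geom_sum_eq h1]
    have : (ζ ^ k) ^ n = 1 := by
      rw [← pow_mul, mul_comm, pow_mul, hζ.pow_eq_one, one_pow]
    rw [this, sub_self, zero_div]
lemma aux_ball : Metric.eball (0:ℂ) 1 = Metric.ball (0:ℂ) 1 := by
  ext z
  simp [Metric.mem_eball, Metric.mem_ball, edist_dist, ENNReal.ofReal_lt_one]
  rw [enorm_eq_nnnorm]
  norm_cast

/-- Value at 0 of a power series. -/
lemma aux_at_zero (c : ℕ → ℂ) (S : ℂ) (h : HasSum (fun k : ℕ => c k * (0:ℂ) ^ k) S) :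
    S = c 0 := by
  have h0 : HasSum (fun k : ℕ => c k * (0:ℂ) ^ k) (c 0 * (0:ℂ) ^ 0) :=
    hasSum_single 0 (fun k hk => by rw [zero_pow hk, mul_zero])
  have := h.unique h0
  simpa using this

/-- Wiener-type coefficient bounds for a self-map of the disk. -/
lemma schwarz_coeff (c : ℕ → ℂ) (f : ℂ → ℂ)
    (hf : ∀ z : ℂ, ‖z‖ < 1 → HasSum (fun k : ℕ => c k * z ^ k) (f z))
    (hfb : ∀ z : ℂ, ‖z‖ < 1 → ‖f z‖ ≤ 1) :
    ‖c 0‖ ≤ 1 ∧ ∀ n : ℕ, 1 ≤ n → ‖c n‖ ≤ 2 * (1 - ‖c 0‖) := by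
  have hf00 : f 0 = c 0 := aux_at_zero c (f 0) (hf 0 (by simp))
  have hc0 : ‖c 0‖ ≤ 1 := hf00 ▸ hfb 0 (by simp)
  refine ⟨hc0, fun n hn => ?_⟩
  have hn0 : n ≠ 0 := Nat.one_le_iff_ne_zero.1 hn
  have hnC : (n : ℂ) ≠ 0 := Nat.cast_ne_zero.2 hn0
  rcases lt_or_eq_of_le hc0 with hlt | heq
  -- main case : ‖c 0‖ < 1
  · -- construct χ
    set ζ : ℂ := Complex.exp (2 * Real.pi * Complex.I / n) with hζdef
    have hζ : IsPrimitiveRoot ζ n := Complex.isPrimitiveRoot_exp n hn0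
    have hζ1 : ‖ζ‖ = 1 := by
      have h1 : ‖ζ‖ ^ n = 1 := by rw [← norm_pow, hζ.pow_eq_one, norm_one]
      by_contra h
      rcases lt_or_gt_of_ne h with h' | h'
      · have := pow_lt_one₀ (norm_nonneg ζ) h' hn0
        rw [h1] at this; exact lt_irrefl _ this
      · have := one_lt_pow₀ h' hn0
        rw [h1] at this; exact lt_irrefl _ this
    have hχsum : ∀ u : ℂ, ‖u‖ < 1 →
        ∃ S : ℂ, ‖S‖ ≤ 1 ∧ HasSum (fun m : ℕ => c (n * m) * u ^ m) S := by
      intro u hu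
      obtain ⟨z, hzn⟩ := IsAlgClosed.exists_pow_nat_eq u (Nat.pos_of_ne_zero hn0)
      have hz : ‖z‖ < 1 := by
        by_contra hz1
        push_neg at hz1
        have h1 : (1:ℝ) ≤ ‖z‖ ^ n := one_le_pow₀ hz1
        rw [← hzn] at hu
        rw [norm_pow] at hu
        linarith
      have hrot : ∀ j : ℕ, ‖ζ ^ j * z‖ < 1 := by
        intro j
        rw [norm_mul, norm_pow, hζ1, one_pow, one_mul]; exact hz
      have hj : ∀ j ∈ range n, HasSum (fun k : ℕ => c k * (ζ ^ j * z) ^ k) (f (ζ ^ j * z)) :=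
        fun j _ => hf _ (hrot j)
      have hsum1 : HasSum (fun k : ℕ => ∑ j ∈ range n, c k * (ζ ^ j * z) ^ k)
          (∑ j ∈ range n, f (ζ ^ j * z)) := hasSum_sum hj
      set S : ℂ := (n : ℂ)⁻¹ * ∑ j ∈ range n, f (ζ ^ j * z) with hSdef
      have hterm : (fun k : ℕ => (n:ℂ)⁻¹ * ∑ j ∈ range n, c k * (ζ ^ j * z) ^ k)
          = fun k : ℕ => if n ∣ k then c k * z ^ k else 0 := by
        funext k
        have h2 : ∀ j, c k * (ζ ^ j * z) ^ k = (ζ ^ k) ^ j * (c k * z ^ k) := by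
          intro j
          rw [mul_pow, ← pow_mul, mul_comm j k, pow_mul]; ring
        rw [Finset.sum_congr rfl (fun j _ => h2 j), ← Finset.sum_mul, aux_rootsum hζ k]
        by_cases h : n ∣ k
        · rw [if_pos h, if_pos h, ← mul_assoc, inv_mul_cancel₀ hnC, one_mul]
        · rw [if_neg h, if_neg h, zero_mul, mul_zero]
      have hsum2 : HasSum (fun k : ℕ => if n ∣ k then c k * z ^ k else 0) S := by
        have := hsum1.mul_left ((n:ℂ)⁻¹)
        rwa [hterm] at this
      have hinj : Function.Injective (fun m : ℕ => n * m) :=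
        fun a b h => Nat.eq_of_mul_eq_mul_left (Nat.pos_of_ne_zero hn0) h
      have hout : ∀ k : ℕ, k ∉ Set.range (fun m : ℕ => n * m) →
          (if n ∣ k then c k * z ^ k else 0) = 0 := by
        intro k hk
        rw [if_neg]
        intro ⟨m, hm⟩
        exact hk ⟨m, hm.symm⟩
      have hsum3 := (hinj.hasSum_iff hout).2 hsum2
      refine ⟨S, ?_, ?_⟩
      · rw [hSdef, norm_mul, norm_inv, Complex.norm_natCast]
        have hb : ‖∑ j ∈ range n, f (ζ ^ j * z)‖ ≤ (n : ℝ) := by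
          calc ‖∑ j ∈ range n, f (ζ ^ j * z)‖ ≤ ∑ j ∈ range n, ‖f (ζ ^ j * z)‖ :=
                norm_sum_le _ _
            _ ≤ ∑ _j ∈ range n, (1:ℝ) := Finset.sum_le_sum (fun j _ => hfb _ (hrot j))
            _ = (n : ℝ) := by simp
        have hnR : (0:ℝ) < (n:ℝ) := Nat.cast_pos.2 (Nat.pos_of_ne_zero hn0)
        calc ((n:ℝ))⁻¹ * ‖∑ j ∈ range n, f (ζ ^ j * z)‖ ≤ ((n:ℝ))⁻¹ * (n:ℝ) := by
              apply mul_le_mul_of_nonneg_left hb (by positivity)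
          _ = 1 := inv_mul_cancel₀ (ne_of_gt hnR)
      · refine hsum3.congr_fun (fun m => ?_)
        simp only [Function.comp]
        rw [if_pos ⟨m, rfl⟩, pow_mul, hzn]
    set χ : ℂ → ℂ := fun u => ∑' m : ℕ, c (n * m) * u ^ m with hχdef
    have hχ : ∀ u : ℂ, ‖u‖ < 1 → HasSum (fun m : ℕ => c (n * m) * u ^ m) (χ u) ∧ ‖χ u‖ ≤ 1 := by
      intro u hu
      obtain ⟨S, hS1, hS2⟩ := hχsum u hu
      have : χ u = S := hS2.tsum_eq
      rw [this]
      exact ⟨hS2, hS1⟩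
    have hfps := aux_hfps (fun m => c (n * m)) χ (fun u hu => (hχ u hu).1)
    have hχ0 : χ 0 = c 0 := by
      have := aux_at_zero (fun m => c (n * m)) (χ 0) (hχ 0 (by simp)).1
      simpa using this
    -- Möbius transform and Schwarz derivative bound
    set d : ℂ := c 0 with hddef
    set db : ℂ := (starRingEnd ℂ) d with hdbdef
    have hχd : HasDerivAt χ (c n) 0 := by
      have h := hfps.hasFPowerSeriesAt.hasDerivAt
      have hv : (FormalMultilinearSeries.ofScalars ℂ (fun m => c (n * m)) 1 fun _ => 1) = c n := by
        rw [FormalMultilinearSeries.ofScalars_apply_eq]; simp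
      rwa [hv] at h
    have hden : ∀ u : ℂ, ‖u‖ < 1 → (1:ℂ) - db * χ u ≠ 0 := by
      intro u hu h
      have h1 : (1:ℂ) = db * χ u := by linear_combination h
      have h2 : (1:ℝ) ≤ ‖d‖ := by
        have h3 := congrArg norm h1
        rw [norm_one, norm_mul, hdbdef, RCLike.norm_conj] at h3
        nlinarith [(hχ u hu).2, norm_nonneg d, norm_nonneg (χ u)]
      linarith
    have hχdiff : DifferentiableOn ℂ χ (ball (0:ℂ) 1) := by
      have := hfps.differentiableOn
      rwa [aux_ball] at this
    set g : ℂ → ℂ := fun u => (χ u - d) / (1 - db * χ u) with hgdef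
    have hgdiff : DifferentiableOn ℂ g (ball (0:ℂ) 1) := by
      apply DifferentiableOn.div
      · exact hχdiff.sub_const d
      · exact (differentiableOn_const 1).sub (hχdiff.const_mul db)
      · exact fun u hu => hden u (mem_ball_zero_iff.1 hu)
    have hg0 : g 0 = 0 := by
      rw [hgdef]
      simp only
      rw [hχ0, sub_self, zero_div]
    have hgb : ∀ u ∈ ball (0:ℂ) 1, ‖g u‖ ≤ 1 := by
      intro u hu
      have hu2 := mem_ball_zero_iff.1 hu
      rw [hgdef]
      simp only
      rw [norm_div]
      have hnum := aux_mobius d (χ u) (hχ u hu2).2 hc0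
      have hpos : 0 < ‖(1:ℂ) - db * χ u‖ := norm_pos_iff.2 (hden u hu2)
      rw [div_le_one hpos]
      exact hnum
    have hderivb : ‖deriv g 0‖ ≤ 1 := by
      by_contra hcon
      push_neg at hcon
      set ε : ℝ := (‖deriv g 0‖ - 1) / 2 with hεdef
      have hε : 0 < ε := by rw [hεdef]; linarith
      have hsl := Complex.norm_deriv_le_div_of_mapsTo_ball hgdiff
        (c := (0:ℂ)) (R₁ := 1) (R₂ := 1 + ε) ?_ one_pos
      · rw [div_one] at hsl
        rw [hεdef] at hsl
        linarith
      · intro u hu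
        rw [mem_closedBall, hg0, dist_zero_right]
        exact le_trans (hgb u hu) (by linarith)
    have hden0 : (1:ℂ) - db * χ 0 ≠ 0 := hden 0 (by simp)
    have hnum' : HasDerivAt (fun u => χ u - d) (c n) 0 := hχd.sub_const d
    have hv2 : HasDerivAt (fun u => (1:ℂ) - db * χ u) (-(db * c n)) 0 := by
      simpa using (hχd.const_mul db).const_sub 1
    have hgd := hnum'.div hv2 hden0
    have hd0 : (1:ℂ) - db * d ≠ 0 := by
      have := hden0
      rwa [hχ0] at this
    have hval : deriv g 0 = c n / (1 - db * d) := by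
      have h1 : deriv g 0 = (c n * ((1:ℂ) - db * χ 0) - (χ 0 - d) * -(db * c n)) /
          ((1:ℂ) - db * χ 0) ^ 2 := hgd.deriv
      rw [h1, hχ0, sub_self, zero_mul, sub_zero]
      field_simp
    have hdbd : db * d = (Complex.normSq d : ℂ) := by
      rw [hdbdef, mul_comm, Complex.mul_conj]
    have hnsq : Complex.normSq d = ‖d‖ ^ 2 := by
      rw [← Complex.sq_norm]
    have hnormden : ‖(1:ℂ) - db * d‖ = 1 - ‖d‖ ^ 2 := by
      rw [hdbd]
      have : (1:ℂ) - (Complex.normSq d : ℂ) = ((1 - Complex.normSq d : ℝ) : ℂ) := by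
        push_cast; ring
      rw [this, Complex.norm_real, Real.norm_eq_abs, abs_of_nonneg, hnsq]
      rw [hnsq]
      have hd1 : ‖d‖ < 1 := hlt
      nlinarith [norm_nonneg d]
    have hfin : ‖c n‖ ≤ 1 - ‖d‖ ^ 2 := by
      have h2 : ‖deriv g 0‖ = ‖c n‖ / (1 - ‖d‖ ^ 2) := by
        rw [hval, norm_div, hnormden]
      rw [h2] at hderivb
      have hpos : 0 < 1 - ‖d‖ ^ 2 := by nlinarith [norm_nonneg d]
      rw [div_le_one hpos] at hderivb
      linarith
    have hd1 : ‖d‖ ≤ 1 := hc0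
    nlinarith [norm_nonneg d]
  -- degenerate case : ‖c 0‖ = 1
  · have hfps := aux_hfps c f hf
    have hfdiff : DifferentiableOn ℂ f (ball (0:ℂ) 1) := by
      have := hfps.differentiableOn
      rwa [aux_ball] at this
    have hmax : IsMaxOn (norm ∘ f) (ball (0:ℂ) 1) 0 := by
      apply isMaxOn_iff.2
      intro z hz
      simp only [Function.comp]
      calc ‖f z‖ ≤ 1 := hfb z (mem_ball_zero_iff.1 hz)
        _ = ‖f 0‖ := by rw [hf00, ← heq]
    have heqon := Complex.eqOn_of_isPreconnected_of_isMaxOn_norm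
      (convex_ball (0:ℂ) 1).isPreconnected isOpen_ball hfdiff (mem_ball_self one_pos) hmax
    have hconst : ∀ z : ℂ, ‖z‖ < 1 →
        HasSum (fun k : ℕ => (if k = 0 then c 0 else 0) * z ^ k) ((fun _ : ℂ => f 0) z) := by
      intro z hz
      have h0 : HasSum (fun k : ℕ => (if k = 0 then c 0 else 0) * z ^ k)
          ((if 0 = 0 then c 0 else 0) * z ^ 0) :=
        hasSum_single 0 (fun k hk => by rw [if_neg hk, zero_mul])
      simpa [hf00] using h0
    have hq := aux_hfps (fun k => if k = 0 then c 0 else 0) (fun _ => f 0) hconst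
    have heq2 : ∀ᶠ z in nhds (0:ℂ), f z = f 0 := by
      filter_upwards [ball_mem_nhds (0:ℂ) one_pos] with z hz
      exact heqon hz
    have hps := hfps.hasFPowerSeriesAt.eq_formalMultilinearSeries_of_eventually
      hq.hasFPowerSeriesAt heq2
    have hcc : c = fun k => if k = 0 then c 0 else 0 :=
      FormalMultilinearSeries.ofScalars_series_injective ℂ ℂ hps
    have hcn : c n = 0 := by
      have := congrFun hcc n
      rwa [if_neg hn0] at this
    rw [hcn, ← heq]
    simp

lemma schwarz_fn_coeff (w : ℂ → ℂ) (a : ℕ → ℂ)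
    (hw : ∀ z : ℂ, ‖z‖ < 1 → HasSum (fun n : ℕ => a n * z ^ n) (w z))
    (hb : ∀ z : ℂ, ‖z‖ < 1 → ‖w z‖ ≤ 1)
    (ha0 : a 0 = 0) :
    ‖a 1‖ ≤ 1 ∧ ∀ n : ℕ, 1 ≤ n → ‖a (n + 1)‖ ≤ 2 * (1 - ‖a 1‖) := by
  set c : ℕ → ℂ := fun k => a (k + 1) with hcdef
  have hshift : ∀ z : ℂ, z ≠ 0 → ‖z‖ < 1 → HasSum (fun k : ℕ => c k * z ^ k) (w z / z) := by
    intro z hz0 hz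
    have h1 := hw z hz
    have hinj : Function.Injective (fun k : ℕ => k + 1) := fun x y h => Nat.succ_injective h
    have hside : ∀ k : ℕ, k ∉ Set.range (fun k : ℕ => k + 1) → a k * z ^ k = 0 := by
      intro k hk
      have hk0 : k = 0 := by
        rcases k with _ | k
        · rfl
        · exact absurd ⟨k, rfl⟩ hk
      rw [hk0, ha0, zero_mul]
    have h2 := (hinj.hasSum_iff (f := fun n : ℕ => a n * z ^ n) hside).2 h1
    have h3 : HasSum (fun k : ℕ => (c k * z ^ k) * z) (w z) := by
      have e : ((fun n : ℕ => a n * z ^ n) ∘ (fun k : ℕ => k + 1))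
          = fun k : ℕ => (c k * z ^ k) * z := by
        funext k
        simp only [Function.comp, hcdef]
        rw [pow_succ]; ring
      rw [e] at h2; exact h2
    have h4 := h3.div_const z
    have e2 : (fun k : ℕ => (c k * z ^ k) * z / z) = fun k : ℕ => c k * z ^ k := by
      funext k; field_simp
    rwa [e2] at h4
  set φf : ℂ → ℂ := fun z => ∑' k : ℕ, c k * z ^ k with hφfdef
  have hφf : ∀ z : ℂ, ‖z‖ < 1 → HasSum (fun k : ℕ => c k * z ^ k) (φf z) := by
    intro z hz
    by_cases hz0 : z = 0
    · subst hz0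
      have h0 : HasSum (fun k : ℕ => c k * (0:ℂ) ^ k) (c 0 * (0:ℂ) ^ 0) :=
        hasSum_single 0 (fun k hk => by rw [zero_pow hk, mul_zero])
      have : φf 0 = c 0 * (0:ℂ) ^ 0 := h0.tsum_eq
      rw [this]; exact h0
    · have h := hshift z hz0 hz
      have : φf z = w z / z := h.tsum_eq
      rw [this]; exact h
  have hφfb : ∀ z : ℂ, ‖z‖ < 1 → ‖φf z‖ ≤ 1 := by
    have hdiff : DifferentiableOn ℂ φf (ball (0:ℂ) 1) := by
      have := (aux_hfps c φf hφf).differentiableOn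
      rwa [aux_ball] at this
    apply aux_max φf hdiff
    intro z hz0 hz
    have hval : φf z = w z / z := (hshift z hz0 hz).tsum_eq
    rw [hval, norm_div]
    have hzp : 0 < ‖z‖ := norm_pos_iff.2 hz0
    gcongr
    exact hb z hz
  obtain ⟨h1, h2⟩ := schwarz_coeff c φf hφf hφfb
  exact ⟨h1, fun n hn => h2 n hn⟩

/-- Weighted Bohr inequality for the derivative of a Schwarz function
(Theorem 6.1): if `w` is a Schwarz function with coefficients `aₙ` and
`φ₀(r) ≥ 2 Σ_{n≥1} (n+1) φₙ(r)`, then `Σ_{n≥0} (n+1)|a_{n+1}| φₙ(r) ≤ φ₀(r)`. -/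
theorem weighted_bohr_schwarz_derivative (w : ℂ → ℂ) (a : ℕ → ℂ) (φ : ℕ → ℝ → ℝ)
    (hw : ∀ z : ℂ, ‖z‖ < 1 → HasSum (fun n : ℕ => a n * z ^ n) (w z))
    (hb : ∀ z : ℂ, ‖z‖ < 1 → ‖w z‖ ≤ 1)
    (ha0 : a 0 = 0) (hw0 : w 0 = 0)
    (hφ0 : ∀ n : ℕ, ∀ x : ℝ, 0 ≤ x → x < 1 → 0 ≤ φ n x)
    (hφc : ∀ n : ℕ, ContinuousOn (φ n) (Set.Ico 0 1))
    (hφu : TendstoLocallyUniformlyOn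
      (fun (N : ℕ) (x : ℝ) => ∑ n ∈ Finset.range N, φ n x)
      (fun x => ∑' n : ℕ, φ n x) atTop (Set.Ico (0 : ℝ) 1))
    (r : ℝ) (hr0 : 0 ≤ r) (hr : r < 1)
    (hsum : Summable fun n : ℕ => ((n : ℝ) + 2) * φ (n + 1) r)
    (hcond : φ 0 r ≥ 2 * ∑' n : ℕ, ((n : ℝ) + 2) * φ (n + 1) r) :
    ∑' n : ℕ, ((n : ℝ) + 1) * ‖a (n + 1)‖ * φ n r ≤ φ 0 r := by
  obtain ⟨ht1, hbnd⟩ := schwarz_fn_coeff w a hw hb ha0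
  set t : ℝ := ‖a 1‖ with htdef
  have ht0 : 0 ≤ t := norm_nonneg _
  have hφr : ∀ n : ℕ, 0 ≤ φ n r := fun n => hφ0 n r hr0 hr
  set F : ℕ → ℝ := fun n => ((n : ℝ) + 1) * ‖a (n + 1)‖ * φ n r with hFdef
  have hFnn : ∀ n : ℕ, 0 ≤ F n := fun n =>
    mul_nonneg (mul_nonneg (by positivity) (norm_nonneg _)) (hφr n)
  have hFtail : ∀ n : ℕ, F (n + 1) ≤ 2 * (1 - t) * (((n : ℝ) + 2) * φ (n + 1) r) := by
    intro n
    have hc : ‖a (n + 1 + 1)‖ ≤ 2 * (1 - t) := hbnd (n + 1) (by omega)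
    have h1 : F (n + 1) = ((n : ℝ) + 2) * ‖a (n + 2)‖ * φ (n + 1) r := by
      rw [hFdef]; push_cast; ring_nf
    rw [h1]
    have h2 : ((n : ℝ) + 2) * ‖a (n + 2)‖ * φ (n + 1) r
        ≤ ((n : ℝ) + 2) * (2 * (1 - t)) * φ (n + 1) r := by
      apply mul_le_mul_of_nonneg_right _ (hφr (n + 1))
      apply mul_le_mul_of_nonneg_left hc (by positivity)
    calc ((n : ℝ) + 2) * ‖a (n + 2)‖ * φ (n + 1) r
        ≤ ((n : ℝ) + 2) * (2 * (1 - t)) * φ (n + 1) r := h2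
      _ = 2 * (1 - t) * (((n : ℝ) + 2) * φ (n + 1) r) := by ring
  have hGsum : Summable (fun n : ℕ => 2 * (1 - t) * (((n : ℝ) + 2) * φ (n + 1) r)) :=
    hsum.mul_left _
  have hTail : Summable (fun n : ℕ => F (n + 1)) :=
    Summable.of_nonneg_of_le (fun n => hFnn (n + 1)) hFtail hGsum
  have hF : Summable F := (summable_nat_add_iff 1).1 hTail
  have hsplit : ∑' n : ℕ, F n = F 0 + ∑' n : ℕ, F (n + 1) := by
    have := Summable.sum_add_tsum_nat_add 1 hF
    rw [← this]
    simp
  have hF0 : F 0 = t * φ 0 r := by simp only [hFdef, htdef]; norm_num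
  have htail_le : ∑' n : ℕ, F (n + 1)
      ≤ 2 * (1 - t) * ∑' n : ℕ, ((n : ℝ) + 2) * φ (n + 1) r := by
    calc ∑' n : ℕ, F (n + 1) ≤ ∑' n : ℕ, 2 * (1 - t) * (((n : ℝ) + 2) * φ (n + 1) r) :=
          Summable.tsum_le_tsum hFtail hTail hGsum
      _ = 2 * (1 - t) * ∑' n : ℕ, ((n : ℝ) + 2) * φ (n + 1) r := tsum_mul_left
  have hSnn : 0 ≤ ∑' n : ℕ, ((n : ℝ) + 2) * φ (n + 1) r :=
    tsum_nonneg (fun n => mul_nonneg (by positivity) (hφr (n + 1)))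
  have hφ0nn : 0 ≤ φ 0 r := hφr 0
  calc ∑' n : ℕ, ((n : ℝ) + 1) * ‖a (n + 1)‖ * φ n r = F 0 + ∑' n : ℕ, F (n + 1) := hsplit
    _ ≤ t * φ 0 r + 2 * (1 - t) * ∑' n : ℕ, ((n : ℝ) + 2) * φ (n + 1) r := by
        rw [hF0]; linarith [htail_le]
    _ ≤ t * φ 0 r + (1 - t) * φ 0 r := by nlinarith [hcond, hSnn]
    _ = φ 0 r := by ring
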